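/- Let r > 1 and let ν = {-π = s_0 < s_1 < ... < s_l = π} be a partition of [-π, π] with norm ρ = max_i |s_{i+1} - s_i|. For t ∈ [-π, π] let ⌊t⌋ denote the largest element of ν that is ≤ t. Then for every t ∈ [-π, π], ∫_{-π}^{t} |D_N(⌊t⌋ - ⌊s⌋)|^r ds ≤ 5(ρ + (2N+1)^{-1})(2N+1)^r + (2π^r/(r-1))(2N+1)^{r-1}. -/

import Mathlib

open Real MeasureTheory

/-- The Dirichlet kernel with `2N+1` harmonics. -/
noncomputable def dirichlet (N : ℕ) (t : ℝ) : ℂ :=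
  ∑ l ∈ Finset.Icc (-(N : ℤ)) (N : ℤ), Complex.exp (Complex.I * l * t)

lemma norm_dirichlet_le (N : ℕ) (x : ℝ) : ‖dirichlet N x‖ ≤ 2 * N + 1 := by
  unfold dirichlet
  calc ‖∑ l ∈ Finset.Icc (-(N:ℤ)) (N:ℤ), Complex.exp (Complex.I * l * x)‖
      ≤ ∑ l ∈ Finset.Icc (-(N:ℤ)) (N:ℤ), ‖Complex.exp (Complex.I * l * x)‖ :=
        norm_sum_le _ _
    _ = ∑ l ∈ Finset.Icc (-(N:ℤ)) (N:ℤ), 1 := by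
        refine Finset.sum_congr rfl fun l _ => ?_
        have h : Complex.I * l * x = ((l * x : ℝ) : ℂ) * Complex.I := by push_cast; ring
        rw [h, Complex.norm_exp_ofReal_mul_I]
    _ = 2 * N + 1 := by
        rw [Finset.sum_const, Int.card_Icc]
        have : ((N:ℤ) + 1 - -(N:ℤ)).toNat = 2 * N + 1 := by omega
        rw [this]
        push_cast; ring

lemma norm_dirichlet_le_div (N : ℕ) {y : ℝ} (h0 : 0 < y) (h2 : y < 2 * π) :
    ‖dirichlet N y‖ ≤ π / min y (2 * π - y) := by
  have hπ := Real.pi_pos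
  set z : ℂ := Complex.exp (Complex.I * y) with hz
  have hz0 : z ≠ 0 := Complex.exp_ne_zero _
  have hznorm : ‖z‖ = 1 := by
    rw [hz, mul_comm, Complex.norm_exp_ofReal_mul_I]
  have hz1 : z ≠ 1 := by
    rw [hz, Ne, Complex.exp_eq_one_iff]
    rintro ⟨n, hn⟩
    have him : y = n * (2 * π) := by
      have := congrArg Complex.im hn
      simpa using this
    rcases lt_or_ge n 1 with h | h
    · have : (n : ℝ) ≤ 0 := by exact_mod_cast Int.lt_add_one_iff.mp (by exact_mod_cast h)
      nlinarith
    · have : (1 : ℝ) ≤ (n : ℝ) := by exact_mod_cast h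
      nlinarith
  -- rewrite dirichlet as zpow sum
  have hterm : ∀ l : ℤ, Complex.exp (Complex.I * l * y) = z ^ l := by
    intro l
    rw [hz, ← Complex.exp_int_mul]
    ring_nf
  have hmap : Finset.Icc (-(N:ℤ)) (N:ℤ) =
      Finset.map ⟨fun k : ℕ => (k : ℤ) - N, @id (Function.Injective fun k : ℕ => (k:ℤ) - N) (by intro a b hab; simpa using hab)⟩
        (Finset.range (2 * N + 1)) := by
    ext l
    simp only [Finset.mem_Icc, Finset.mem_map, Finset.mem_range,
      Function.Embedding.coeFn_mk]
    constructor
    · rintro ⟨h1, h2⟩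
      exact ⟨(l + N).toNat, by omega, by omega⟩
    · rintro ⟨k, hk, rfl⟩
      omega
  have hsum : dirichlet N y = (z ^ (2 * N + 1) - 1) / (z - 1) * z ^ (-(N:ℤ)) := by
    unfold dirichlet
    rw [hmap, Finset.sum_map]
    simp only [Function.Embedding.coeFn_mk, hterm]
    have : ∀ k : ℕ, z ^ ((k : ℤ) - N) = z ^ k * z ^ (-(N:ℤ)) := by
      intro k
      rw [zpow_sub₀ hz0, zpow_natCast, div_eq_mul_inv, ← zpow_neg]
    simp_rw [this, ← Finset.sum_mul, geom_sum_eq hz1]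
  -- norm bound
  have hnorm2 : ‖dirichlet N y‖ ≤ 2 / ‖z - 1‖ := by
    rw [hsum, norm_mul, norm_div, norm_zpow, hznorm, one_zpow, mul_one]
    gcongr
    calc ‖z ^ (2 * N + 1) - 1‖ ≤ ‖z ^ (2 * N + 1)‖ + ‖(1:ℂ)‖ := norm_sub_le _ _
      _ = 2 := by rw [norm_pow, hznorm, one_pow, norm_one]; norm_num
  -- ‖z - 1‖ = 2 * sin (y/2)
  have hsin : ‖z - 1‖ = 2 * Real.sin (y / 2) := by
    have hzexp : z = Complex.exp ((y : ℂ) * Complex.I) := by rw [hz]; ring_nf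
    rw [hzexp, Complex.exp_mul_I]
    have : Complex.cos y + Complex.sin y * Complex.I - 1
        = ((Real.cos y - 1 : ℝ) : ℂ) + ((Real.sin y : ℝ) : ℂ) * Complex.I := by
      push_cast [← Complex.ofReal_cos, ← Complex.ofReal_sin]
      ring
    rw [this]
    rw [Complex.norm_def, Complex.normSq_add_mul_I]
    have hcs : (Real.cos y - 1) ^ 2 + Real.sin y ^ 2 = 2 - 2 * Real.cos y := by
      nlinarith [Real.sin_sq_add_cos_sq y]
    rw [hcs]
    have hhalf : Real.sin (y / 2) = Real.sqrt ((1 - Real.cos y) / 2) :=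
      Real.sin_half_eq_sqrt (le_of_lt h0) (by linarith)
    rw [hhalf, show (2 - 2 * Real.cos y) = 4 * ((1 - Real.cos y)/2) by ring,
      Real.sqrt_mul (by norm_num : (0:ℝ) ≤ 4),
      show Real.sqrt 4 = 2 by
        rw [show (4:ℝ) = 2^2 by norm_num, Real.sqrt_sq (by norm_num)]]
  -- sin (y/2) ≥ min y (2π - y) / π
  set m := min y (2 * π - y) with hm
  have hmpos : 0 < m := lt_min h0 (by linarith)
  have hmle : m / π ≤ Real.sin (y / 2) := by
    rcases le_total y π with h | h
    · have := Real.mul_le_sin (x := y / 2) (by linarith) (by linarith)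
      have hmy : m ≤ y := min_le_left _ _
      calc m / π ≤ y / π := by gcongr
        _ = 2 / π * (y / 2) := by ring
        _ ≤ Real.sin (y / 2) := this
    · have hx : Real.sin (y / 2) = Real.sin (π - y / 2) := (Real.sin_pi_sub _).symm
      have := Real.mul_le_sin (x := π - y / 2) (by linarith) (by linarith)
      have hmy : m ≤ 2 * π - y := min_le_right _ _
      calc m / π ≤ (2 * π - y) / π := by gcongr
        _ = 2 / π * (π - y / 2) := by ring
        _ ≤ Real.sin (π - y / 2) := this
        _ = Real.sin (y / 2) := (Real.sin_pi_sub _)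
  have hsinpos : 0 < Real.sin (y / 2) := lt_of_lt_of_le (by positivity) hmle
  calc ‖dirichlet N y‖ ≤ 2 / ‖z - 1‖ := hnorm2
    _ = 1 / Real.sin (y / 2) := by rw [hsin]; field_simp
    _ ≤ 1 / (m / π) := one_div_le_one_div_of_le (by positivity) hmle
    _ = π / m := by field_simp

theorem stmt3 (r : ℝ) (hr : 1 < r) (N : ℕ)
    (ν : Finset ℝ) (hm : (-π) ∈ ν) (hM : π ∈ ν) (hsub : ↑ν ⊆ Set.Icc (-π) π)
    (fl : ℝ → ℝ)
    (hfl : ∀ t ∈ Set.Icc (-π) π,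
      fl t ∈ ν ∧ fl t ≤ t ∧ ∀ z ∈ ν, z ≤ t → z ≤ fl t)
    (ρ : ℝ) (hρ : ∀ t ∈ Set.Icc (-π) π, t - fl t ≤ ρ)
    (t : ℝ) (ht : t ∈ Set.Icc (-π) π) :
    (∫ s in (-π)..t, ‖dirichlet N (fl t - fl s)‖ ^ r) ≤
      5 * (ρ + (2 * (N : ℝ) + 1)⁻¹) * (2 * (N : ℝ) + 1) ^ r +
        (2 * π ^ r / (r - 1)) * (2 * (N : ℝ) + 1) ^ (r - 1) := by
  have hπ := Real.pi_pos
  obtain ⟨htl, htu⟩ := ht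
  have hNpos : (0:ℝ) < 2 * N + 1 := by positivity
  set δ : ℝ := (2 * (N:ℝ) + 1)⁻¹ with hδdef
  have hδpos : 0 < δ := by positivity
  set τ : ℝ := fl t with hτdef
  obtain ⟨hτν, hτle, hτmax⟩ := hfl t ⟨htl, htu⟩
  have hτmem : τ ∈ Set.Icc (-π) π := hsub hτν
  have hρt : t - τ ≤ ρ := hρ t ⟨htl, htu⟩
  have hρ0 : 0 ≤ ρ := le_trans (by linarith) hρt
  set f : ℝ → ℝ := fun s => ‖dirichlet N (τ - fl s)‖ ^ r with hfdef
  have hrpow_pos : (0:ℝ) < (2 * (N:ℝ) + 1) ^ r := Real.rpow_pos_of_pos hNpos r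
  have hrpow1_pos : (0:ℝ) < (2 * (N:ℝ) + 1) ^ (r - 1) := Real.rpow_pos_of_pos hNpos _
  have hπr_pos : (0:ℝ) < π ^ r := Real.rpow_pos_of_pos hπ r
  have hRHS0 : 0 ≤ 5 * (ρ + δ) * (2 * (N:ℝ) + 1) ^ r +
      (2 * π ^ r / (r - 1)) * (2 * (N:ℝ) + 1) ^ (r - 1) := by
    have h1 : 0 ≤ 5 * (ρ + δ) * (2 * (N:ℝ) + 1) ^ r := by positivity
    have h2 : 0 ≤ (2 * π ^ r / (r - 1)) * (2 * (N:ℝ) + 1) ^ (r - 1) := by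
      apply mul_nonneg _ hrpow1_pos.le
      apply div_nonneg (by positivity) (by linarith)
    linarith
  by_cases hInt : IntervalIntegrable f volume (-π) t
  case neg =>
    rw [intervalIntegral.integral_undef hInt]
    exact hRHS0
  rw [intervalIntegral.integral_of_le htl]
  have hIntOn : IntegrableOn f (Set.Ioc (-π) t) volume := hInt.1
  set a : ℝ := ρ + δ - π with hadef
  set b : ℝ := τ - δ with hbdef
  set m : ℝ := (τ + ρ - π) / 2 with hmdef
  set G1 : Set ℝ := Set.Ioc (-π) t ∩ (Set.Icc a b ∩ Set.Ici m) with hG1def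
  set G2 : Set ℝ := Set.Ioc (-π) t ∩ (Set.Icc a b ∩ Set.Iio m) with hG2def
  set B : Set ℝ := Set.Ioc (-π) t \ Set.Icc a b with hBdef
  have hmeasG1 : MeasurableSet G1 :=
    measurableSet_Ioc.inter ((measurableSet_Icc).inter measurableSet_Ici)
  have hmeasG2 : MeasurableSet G2 :=
    measurableSet_Ioc.inter ((measurableSet_Icc).inter measurableSet_Iio)
  have hmeasB : MeasurableSet B := measurableSet_Ioc.diff measurableSet_Icc
  have hsubG1 : G1 ⊆ Set.Ioc (-π) t := Set.inter_subset_left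
  have hsubG2 : G2 ⊆ Set.Ioc (-π) t := Set.inter_subset_left
  have hsubB : B ⊆ Set.Ioc (-π) t := Set.diff_subset
  have hcover : Set.Ioc (-π) t = B ∪ (G1 ∪ G2) := by
    ext s
    simp only [hBdef, hG1def, hG2def, Set.mem_union, Set.mem_diff, Set.mem_inter_iff,
      Set.mem_Icc, Set.mem_Ici, Set.mem_Iio]
    rcases le_or_gt m s with h | h <;> by_cases h2 : a ≤ s ∧ s ≤ b <;>
      constructor <;> intro hh <;> tauto
  have hdisj1 : Disjoint B (G1 ∪ G2) := by
    rw [Set.disjoint_left]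
    rintro s ⟨_, hsB⟩ (⟨_, hsG, _⟩ | ⟨_, hsG, _⟩) <;> exact hsB hsG
  have hdisj2 : Disjoint G1 G2 := by
    rw [Set.disjoint_left]
    rintro s ⟨_, _, hs1⟩ ⟨_, _, hs2⟩
    exact absurd (Set.mem_Ici.1 hs1) (not_le.2 (Set.mem_Iio.1 hs2))
  have hsplit : ∫ s in Set.Ioc (-π) t, f s =
      (∫ s in B, f s) + ((∫ s in G1, f s) + ∫ s in G2, f s) := by
    rw [hcover, setIntegral_union hdisj1 (hmeasG1.union hmeasG2)
        (hIntOn.mono_set hsubB)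
        (hIntOn.mono_set (Set.union_subset hsubG1 hsubG2)),
      setIntegral_union hdisj2 hmeasG2 (hIntOn.mono_set hsubG1) (hIntOn.mono_set hsubG2)]
  -- pointwise facts
  have hf0 : ∀ s, 0 ≤ f s := fun s => Real.rpow_nonneg (norm_nonneg _) r
  have hfle : ∀ s, f s ≤ (2 * (N:ℝ) + 1) ^ r := fun s =>
    Real.rpow_le_rpow (norm_nonneg _) (norm_dirichlet_le N _) (by linarith)
  have hpt : ∀ s, s ∈ Set.Ioc (-π) t → a ≤ s → s ≤ b →
      ‖dirichlet N (τ - fl s)‖ ≤ π / min (τ - s) (π + s - ρ) := by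
    intro s hs ha' hb'
    have hsIcc : s ∈ Set.Icc (-π) π := ⟨hs.1.le, hs.2.trans htu⟩
    obtain ⟨hsν, hsle, _⟩ := hfl s hsIcc
    have hflρ : s - fl s ≤ ρ := hρ s hsIcc
    have hfsτ : fl s ≤ τ := hτmax (fl s) hsν (hsle.trans hs.2)
    have hτπ : τ ≤ π := hτmem.2
    have hx1 : τ - s ≤ τ - fl s := by linarith
    have hx2 : π + s - ρ ≤ 2 * π - (τ - fl s) := by linarith
    have hd1 : δ ≤ τ - s := by simp only [hbdef] at hb'; linarith
    have hd2 : δ ≤ π + s - ρ := by simp only [hadef] at ha'; linarith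
    have hminpos : 0 < min (τ - s) (π + s - ρ) := lt_min (by linarith) (by linarith)
    have hx0 : 0 < τ - fl s := by linarith
    have hx2π : τ - fl s < 2 * π := by linarith
    have hminle : min (τ - s) (π + s - ρ) ≤ min (τ - fl s) (2 * π - (τ - fl s)) :=
      le_min ((min_le_left _ _).trans hx1) ((min_le_right _ _).trans hx2)
    calc ‖dirichlet N (τ - fl s)‖
        ≤ π / min (τ - fl s) (2 * π - (τ - fl s)) := norm_dirichlet_le_div N hx0 hx2π
      _ ≤ π / min (τ - s) (π + s - ρ) := by gcongr
  -- |B| bound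
  have hBsub : B ⊆ Set.Ioc b t ∪ Set.Ioc (-π) a := by
    rintro s ⟨⟨hs1, hs2⟩, hs3⟩
    rw [Set.mem_Icc, not_and_or, not_le, not_le] at hs3
    rcases hs3 with h | h
    · exact Or.inr ⟨hs1, h.le⟩
    · exact Or.inl ⟨h, hs2⟩
  have hμB : (volume B).toReal ≤ 2 * (ρ + δ) := by
    have h1 : volume B ≤ ENNReal.ofReal (ρ + δ) + ENNReal.ofReal (ρ + δ) := by
      refine le_trans (measure_mono hBsub) (le_trans (measure_union_le _ _) ?_)
      rw [Real.volume_Ioc, Real.volume_Ioc]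
      have e1 : t - b ≤ ρ + δ := by rw [hbdef]; linarith
      have e2 : a - -π ≤ ρ + δ := by rw [hadef]; linarith
      exact add_le_add (ENNReal.ofReal_le_ofReal e1) (ENNReal.ofReal_le_ofReal e2)
    calc (volume B).toReal
        ≤ (ENNReal.ofReal (ρ + δ) + ENNReal.ofReal (ρ + δ)).toReal := by
          apply ENNReal.toReal_mono _ h1
          exact ENNReal.add_ne_top.2 ⟨ENNReal.ofReal_ne_top, ENNReal.ofReal_ne_top⟩
      _ = 2 * (ρ + δ) := by
          rw [ENNReal.toReal_add ENNReal.ofReal_ne_top ENNReal.ofReal_ne_top,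
            ENNReal.toReal_ofReal (by linarith)]
          ring
  have hμBfin : volume B < ⊤ := lt_of_le_of_lt (measure_mono hsubB)
    (by rw [Real.volume_Ioc]; exact ENNReal.ofReal_lt_top)
  have hIB : (∫ s in B, f s) ≤ 2 * (ρ + δ) * ((2 * (N:ℝ) + 1) ^ r) := by
    have hnorm := norm_setIntegral_le_of_norm_le_const (μ := volume) (s := B)
      (f := f) hμBfin (C := (2 * (N:ℝ) + 1) ^ r)
      (fun x _ => by rw [Real.norm_of_nonneg (hf0 x)]; exact hfle x)
    calc (∫ s in B, f s) ≤ ‖∫ s in B, f s‖ := le_abs_self _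
      _ ≤ (2 * (N:ℝ) + 1) ^ r * (volume B).toReal := hnorm
      _ ≤ (2 * (N:ℝ) + 1) ^ r * (2 * (ρ + δ)) := by gcongr
      _ = 2 * (ρ + δ) * ((2 * (N:ℝ) + 1) ^ r) := by ring
  -- generic integral computation
  have hint_u : ∀ T : ℝ, δ ≤ T →
      (∫ u in δ..T, π ^ r / u ^ r) ≤ π ^ r * (δ ^ (1 - r) / (r - 1)) := by
    intro T hT
    have h0T : (0:ℝ) ∉ Set.uIcc δ T := by
      rw [Set.uIcc_of_le hT]
      rintro ⟨h1, _⟩; linarith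
    have hcong : Set.EqOn (fun u : ℝ => π ^ r / u ^ r) (fun u : ℝ => π ^ r * u ^ (-r))
        (Set.uIcc δ T) := by
      intro u hu
      rw [Set.uIcc_of_le hT] at hu
      simp only
      rw [Real.rpow_neg (by linarith [hu.1] : (0:ℝ) ≤ u), div_eq_mul_inv]
    rw [intervalIntegral.integral_congr hcong, intervalIntegral.integral_const_mul,
      integral_rpow (Or.inr ⟨by linarith, h0T⟩)]
    have hTpow : 0 ≤ T ^ (-r + 1) := Real.rpow_nonneg (by linarith) _
    have heq : (T ^ (-r + 1) - δ ^ (-r + 1)) / (-r + 1)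
        = (δ ^ (-r + 1) - T ^ (-r + 1)) / (r - 1) := by
      rw [div_eq_div_iff (by linarith) (by linarith)]
      ring
    rw [heq]
    have h1r : (-r + 1) = (1 - r) := by ring
    rw [h1r]
    have hineq : (δ ^ (1 - r) - T ^ (1 - r)) / (r - 1) ≤ δ ^ (1 - r) / (r - 1) := by
      apply div_le_div_of_nonneg_right ?_ (by linarith)
      linarith [Real.rpow_nonneg (show (0:ℝ) ≤ T by linarith) (1 - r)]
    exact mul_le_mul_of_nonneg_left hineq hπr_pos.le
  -- G1 bound
  have hbound0 : 0 ≤ π ^ r * (δ ^ (1 - r) / (r - 1)) :=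
    mul_nonneg hπr_pos.le (div_nonneg (Real.rpow_nonneg hδpos.le _) (by linarith))
  have hIG1 : (∫ s in G1, f s) ≤ π ^ r * (δ ^ (1 - r) / (r - 1)) := by
    rcases le_or_gt b (-π) with hble | hbgt
    · have hG1e : G1 = ∅ := by
        apply Set.eq_empty_of_forall_notMem
        rintro s ⟨⟨hs1, _⟩, ⟨_, hs2⟩, _⟩
        linarith
      rw [hG1e, setIntegral_empty]
      exact hbound0
    · set g : ℝ → ℝ := fun s => π ^ r / (τ - s) ^ r with hgdef
      have hgpos : ∀ s : ℝ, s ≤ b → 0 < τ - s := by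
        intro s hs; rw [hbdef] at hs; linarith
      have hgcont : ContinuousOn g (Set.Icc (-π) b) := by
        apply ContinuousOn.div continuousOn_const
        · exact ((continuous_const.sub continuous_id).continuousOn).rpow_const
            (fun s hs => Or.inl (hgpos s hs.2).ne')
        · exact fun s hs => (Real.rpow_pos_of_pos (hgpos s hs.2) r).ne'
      have hgint : IntegrableOn g (Set.Icc (-π) b) volume := hgcont.integrableOn_Icc
      have hG1Ioc : G1 ⊆ Set.Ioc (-π) b := by
        rintro s ⟨hs, ⟨_, hs2⟩, _⟩; exact ⟨hs.1, hs2⟩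
      have hmono1 : (∫ s in G1, f s) ≤ ∫ s in G1, g s := by
        apply setIntegral_mono_on (hIntOn.mono_set hsubG1)
          (hgint.mono_set (hG1Ioc.trans Set.Ioc_subset_Icc_self)) hmeasG1
        rintro s ⟨hsIoc, ⟨ha', hb'⟩, hm'⟩
        have hpt' := hpt s hsIoc ha' hb'
        have hms : m ≤ s := hm'
        have hmineq : min (τ - s) (π + s - ρ) = τ - s := min_eq_left (by
          rw [hmdef] at hms; linarith)
        rw [hmineq] at hpt'
        have hτs : 0 < τ - s := hgpos s hb'
        calc f s ≤ (π / (τ - s)) ^ r :=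
              Real.rpow_le_rpow (norm_nonneg _) hpt' (by linarith)
          _ = g s := by
              simp only [hgdef]
              rw [Real.div_rpow hπ.le hτs.le]
      have hmono2 : (∫ s in G1, g s) ≤ ∫ s in Set.Ioc (-π) b, g s := by
        apply setIntegral_mono_set (hgint.mono_set Set.Ioc_subset_Icc_self) ?_
          (HasSubset.Subset.eventuallyLE hG1Ioc)
        filter_upwards [ae_restrict_mem measurableSet_Ioc] with s hs
        have hτs : 0 < τ - s := hgpos s hs.2
        exact div_nonneg hπr_pos.le (Real.rpow_nonneg hτs.le r)
      have hτbδ : τ - b = δ := by rw [hbdef]; ring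
      have hval : (∫ s in Set.Ioc (-π) b, g s) = ∫ u in δ..(τ + π), π ^ r / u ^ r := by
        rw [← intervalIntegral.integral_of_le hbgt.le]
        have : (∫ s in (-π)..b, g s)
            = ∫ s in (-π)..b, (fun u : ℝ => π ^ r / u ^ r) (τ - s) := rfl
        rw [this, intervalIntegral.integral_comp_sub_left (fun u : ℝ => π ^ r / u ^ r) τ,
          hτbδ, show τ - -π = τ + π by ring]
      have hδT : δ ≤ τ + π := by rw [hbdef] at hbgt; linarith
      calc (∫ s in G1, f s) ≤ ∫ s in G1, g s := hmono1
        _ ≤ ∫ s in Set.Ioc (-π) b, g s := hmono2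
        _ = ∫ u in δ..(τ + π), π ^ r / u ^ r := hval
        _ ≤ π ^ r * (δ ^ (1 - r) / (r - 1)) := hint_u _ hδT
  -- G2 bound
  have hIG2 : (∫ s in G2, f s) ≤ π ^ r * (δ ^ (1 - r) / (r - 1)) := by
    rcases lt_or_ge t a with hta | hat
    · have hG2e : G2 = ∅ := by
        apply Set.eq_empty_of_forall_notMem
        rintro s ⟨⟨_, hs1⟩, ⟨hs2, _⟩, _⟩
        linarith
      rw [hG2e, setIntegral_empty]
      exact hbound0
    · set g : ℝ → ℝ := fun s => π ^ r / (π + s - ρ) ^ r with hgdef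
      have hgpos : ∀ s : ℝ, a ≤ s → 0 < π + s - ρ := by
        intro s hs; rw [hadef] at hs; linarith
      have hgcont : ContinuousOn g (Set.Icc a t) := by
        apply ContinuousOn.div continuousOn_const
        · exact ((continuous_const.add continuous_id).sub continuous_const).continuousOn.rpow_const
            (fun s hs => Or.inl (hgpos s hs.1).ne')
        · exact fun s hs => (Real.rpow_pos_of_pos (hgpos s hs.1) r).ne'
      have hgint : IntegrableOn g (Set.Icc a t) volume := hgcont.integrableOn_Icc
      have hG2Icc : G2 ⊆ Set.Icc a t := by
        rintro s ⟨hs, ⟨hs2, _⟩, _⟩; exact ⟨hs2, hs.2⟩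
      have hmono1 : (∫ s in G2, f s) ≤ ∫ s in G2, g s := by
        apply setIntegral_mono_on (hIntOn.mono_set hsubG2) (hgint.mono_set hG2Icc) hmeasG2
        rintro s ⟨hsIoc, ⟨ha', hb'⟩, hm'⟩
        have hpt' := hpt s hsIoc ha' hb'
        have hms : s < m := hm'
        have hmineq : min (τ - s) (π + s - ρ) = π + s - ρ := min_eq_right (by
          rw [hmdef] at hms; linarith)
        rw [hmineq] at hpt'
        have hτs : 0 < π + s - ρ := hgpos s ha'
        calc f s ≤ (π / (π + s - ρ)) ^ r :=
              Real.rpow_le_rpow (norm_nonneg _) hpt' (by linarith)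
          _ = g s := by
              simp only [hgdef]
              rw [Real.div_rpow hπ.le hτs.le]
      have hmono2 : (∫ s in G2, g s) ≤ ∫ s in Set.Icc a t, g s := by
        apply setIntegral_mono_set hgint ?_ (HasSubset.Subset.eventuallyLE hG2Icc)
        filter_upwards [ae_restrict_mem measurableSet_Icc] with s hs
        exact div_nonneg hπr_pos.le (Real.rpow_nonneg (hgpos s hs.1).le r)
      have haδ : a + (π - ρ) = δ := by rw [hadef]; ring
      have hval : (∫ s in Set.Icc a t, g s) = ∫ u in δ..(t + (π - ρ)), π ^ r / u ^ r := by
        rw [integral_Icc_eq_integral_Ioc, ← intervalIntegral.integral_of_le hat]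
        have : (∫ s in a..t, g s)
            = ∫ s in a..t, (fun u : ℝ => π ^ r / u ^ r) (s + (π - ρ)) := by
          apply intervalIntegral.integral_congr
          intro s _
          simp only [hgdef]
          rw [show π + s - ρ = s + (π - ρ) by ring]
        rw [this, intervalIntegral.integral_comp_add_right (fun u : ℝ => π ^ r / u ^ r),
          haδ]
      have hδT : δ ≤ t + (π - ρ) := by rw [hadef] at hat; linarith
      calc (∫ s in G2, f s) ≤ ∫ s in G2, g s := hmono1
        _ ≤ ∫ s in Set.Icc a t, g s := hmono2
        _ = ∫ u in δ..(t + (π - ρ)), π ^ r / u ^ r := hval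
        _ ≤ π ^ r * (δ ^ (1 - r) / (r - 1)) := hint_u _ hδT
  -- assembly
  have hδpow : δ ^ (1 - r) = (2 * (N:ℝ) + 1) ^ (r - 1) := by
    rw [hδdef, Real.inv_rpow hNpos.le, ← Real.rpow_neg hNpos.le, neg_sub]
  have hfin : (∫ s in Set.Ioc (-π) t, f s) ≤
      5 * (ρ + δ) * (2 * (N:ℝ) + 1) ^ r +
        (2 * π ^ r / (r - 1)) * (2 * (N:ℝ) + 1) ^ (r - 1) := by
    rw [hsplit]
    have h2 : π ^ r * (δ ^ (1 - r) / (r - 1)) + π ^ r * (δ ^ (1 - r) / (r - 1))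
        = (2 * π ^ r / (r - 1)) * (2 * (N:ℝ) + 1) ^ (r - 1) := by
      rw [hδpow]; ring
    have h3 : 0 ≤ (ρ + δ) * ((2 * (N:ℝ) + 1) ^ r) :=
      mul_nonneg (by linarith) hrpow_pos.le
    have := add_le_add hIB (add_le_add hIG1 hIG2)
    linarith [this, h2]
  exact hfin
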